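/- Assume μ is Ahlfors d_H-regular and the heat kernel satisfies the upper sub-Gaussian estimate. Let u ∈ L¹(X,μ) and for s ∈ ℝ let E_s(u) = { x ∈ X : u(x) > s }. Let 0 < α ≤ d_H/d_W and R > 0, and set h(u,s) = sup_{r∈(0,R]} r^{−α d_W} μ({ x ∈ E_s(u) : d(x, X ∖ E_s(u)) < r }). If s ↦ h(u,s) belongs to L¹(ℝ, ds), then u ∈ B^{1,α}(X) and there exist constants C₁, C₂ > 0, independent of u and R (depending only on α and the structural constants), such that ‖u‖_{1,α} ≤ C₁ R^{−α d_W} ‖u‖_{L¹(X,μ)} + C₂ ∫_ℝ h(u,s) ds. -/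

import Mathlib

open MeasureTheory ENNReal Metric Filter

noncomputable section

namespace BesovDirichlet

variable {X : Type*} [MeasurableSpace X]

/-- A heat kernel on a measure space: jointly measurable, nonnegative, symmetric,
satisfying the semigroup property and conservative. -/
structure IsHeatKernel (μ : Measure X) (K : ℝ → X → X → ℝ) : Prop where
  measurable : ∀ t : ℝ, Measurable fun xy : X × X => K t xy.1 xy.2
  nonneg : ∀ (t : ℝ) (x y : X), 0 ≤ K t x y
  symm : ∀ (t : ℝ) (x y : X), K t x y = K t y x
  semigroup : ∀ s t : ℝ, 0 < s → 0 < t →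
    ∀ᵐ xy ∂(μ.prod μ), (∫ z, K t xy.1 z * K s z xy.2 ∂μ) = K (t + s) xy.1 xy.2
  conservative : ∀ t : ℝ, 0 < t → ∀ᵐ x ∂μ, (∫ y, K t x y ∂μ) = 1

/-- The heat semigroup `P_t f (x) = ∫ p_t(x,y) f(y) dμ(y)`. -/
def heatOp (μ : Measure X) (K : ℝ → X → X → ℝ) (t : ℝ) (f : X → ℝ) (x : X) : ℝ :=
  ∫ y, K t x y * f y ∂μ

/-- The double integral `∫∫ |f(x) − f(y)|^p p_t(x,y) dμ(x) dμ(y)` as an extended real. -/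
def besovEnergy (μ : Measure X) (K : ℝ → X → X → ℝ) (p t : ℝ) (f : X → ℝ) : ℝ≥0∞ :=
  ∫⁻ x, (∫⁻ y, ENNReal.ofReal (|f x - f y| ^ p) * ENNReal.ofReal (K t x y) ∂μ) ∂μ

/-- The heat-semigroup Besov seminorm `‖f‖_{p,α}`. -/
def besovSeminorm (μ : Measure X) (K : ℝ → X → X → ℝ) (p α : ℝ) (f : X → ℝ) : ℝ≥0∞ :=
  ⨆ (t : ℝ) (_ : 0 < t), ENNReal.ofReal (t ^ (-α)) * besovEnergy μ K p t f ^ (1 / p)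

/-- Membership in the Besov space `B^{p,α}(X)`. -/
def MemBesov (μ : Measure X) (K : ℝ → X → X → ℝ) (p α : ℝ) (f : X → ℝ) : Prop :=
  MemLp f (ENNReal.ofReal p) μ ∧ besovSeminorm μ K p α f ≠ ∞

/-- Ahlfors `d_H`-regularity of the measure `μ`. -/
def AhlforsRegular [PseudoMetricSpace X] (μ : Measure X) (c₁ c₂ dH : ℝ) : Prop :=
  ∀ (x : X) (r : ℝ), 0 < r →
    ENNReal.ofReal (c₁ * r ^ dH) ≤ μ (Metric.ball x r) ∧
      μ (Metric.ball x r) ≤ ENNReal.ofReal (c₂ * r ^ dH)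

/-- Upper sub-Gaussian heat kernel estimate with parameters `d_H, d_W` and constants `c₃, c₄`. -/
def SubGaussianUpperBound [PseudoMetricSpace X] (μ : Measure X) (K : ℝ → X → X → ℝ)
    (c₃ c₄ dH dW : ℝ) : Prop :=
  ∀ t : ℝ, 0 < t → ∀ᵐ xy ∂(μ.prod μ),
    K t xy.1 xy.2 ≤ c₃ * t ^ (-(dH / dW)) *
      Real.exp (-c₄ * (dist xy.1 xy.2 ^ dW / t) ^ (1 / (dW - 1)))

/-- Lower sub-Gaussian heat kernel estimate with parameters `d_H, d_W` and constants `c₅, c₆`. -/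
def SubGaussianLowerBound [PseudoMetricSpace X] (μ : Measure X) (K : ℝ → X → X → ℝ)
    (c₅ c₆ dH dW : ℝ) : Prop :=
  ∀ t : ℝ, 0 < t → ∀ᵐ xy ∂(μ.prod μ),
    c₅ * t ^ (-(dH / dW)) *
        Real.exp (-c₆ * (dist xy.1 xy.2 ^ dW / t) ^ (1 / (dW - 1))) ≤ K t xy.1 xy.2

/-- The metric Besov quantity `N_p^β(f,r) = r^{−(β+d_H/p)} (∬_{d(x,y)<r} |f(x)−f(y)|^p)^{1/p}`. -/
def metricBesovN [PseudoMetricSpace X] (μ : Measure X) (dH p β : ℝ) (f : X → ℝ) (r : ℝ) :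
    ℝ≥0∞ :=
  ENNReal.ofReal (r ^ (-(β + dH / p))) *
    (∫⁻ x, (∫⁻ y in Metric.ball x r, ENNReal.ofReal (|f x - f y| ^ p) ∂μ) ∂μ) ^ (1 / p)

section AuxProofs

open Set Filter

private lemma abs_sub_le_abs_add_abs' (a b : ℝ) : |a - b| ≤ |a| + |b| := by
  simpa [sub_eq_add_neg] using abs_add_le a (-b)

private lemma strip_iff' (a b s : ℝ) :
    s ∈ Set.Ico (a ⊓ b) (a ⊔ b) ↔ ((s < a ∧ ¬ s < b) ∨ (s < b ∧ ¬ s < a)) := by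
  simp only [Set.mem_Ico, inf_le_iff, lt_sup_iff, not_lt]
  constructor
  · rintro ⟨h1 | h1, h2 | h2⟩
    · exact absurd h2 (not_lt.2 h1)
    · exact Or.inr ⟨h2, h1⟩
    · exact Or.inl ⟨h2, h1⟩
    · exact absurd h2 (not_lt.2 h1)
  · rintro (⟨h1, h2⟩ | ⟨h1, h2⟩)
    · exact ⟨Or.inr h2, Or.inl h1⟩
    · exact ⟨Or.inl h2, Or.inr h1⟩

private lemma lintegral_strip (a b : ℝ) :
    ∫⁻ s : ℝ, (Set.Ico (a ⊓ b) (a ⊔ b)).indicator (fun _ => (1:ℝ≥0∞)) s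
      = ENNReal.ofReal |a - b| := by
  have h := lintegral_indicator_one (μ := (volume : Measure ℝ))
    (measurableSet_Ico (a := a ⊓ b) (b := a ⊔ b))
  calc ∫⁻ s : ℝ, (Set.Ico (a ⊓ b) (a ⊔ b)).indicator (fun _ => (1:ℝ≥0∞)) s = volume (Set.Ico (a ⊓ b) (a ⊔ b)) := h
    _ = ENNReal.ofReal (a ⊔ b - a ⊓ b) := Real.volume_Ico
    _ = ENNReal.ofReal |a - b| := by rw [max_sub_min_eq_abs, abs_sub_comm]

private lemma cons_lintegral {Z : Type*} [MeasurableSpace Z] {μ : Measure Z}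
    {K : ℝ → Z → Z → ℝ} (hK : IsHeatKernel μ K) {t : ℝ} (ht : 0 < t) :
    ∀ᵐ x ∂μ, ∫⁻ y, ENNReal.ofReal (K t x y) ∂μ = 1 := by
  filter_upwards [hK.conservative t ht] with x hx
  have hint : Integrable (fun y => K t x y) μ := by
    by_contra hcon
    rw [integral_undef hcon] at hx
    norm_num at hx
  rw [← ofReal_integral_eq_lintegral_ofReal hint
    (Filter.Eventually.of_forall fun y => hK.nonneg t x y), hx, ENNReal.ofReal_one]

private lemma countable_of_separated {Z : Type*} [MetricSpace Z] [MeasurableSpace Z]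
    [BorelSpace Z] (μ : Measure Z) [SigmaFinite μ] {δ : ℝ} {c : ℝ≥0∞}
    (hc : 0 < c) (hlow : ∀ x : Z, c ≤ μ (Metric.ball x δ))
    {T : Set Z} (hT : T.Pairwise fun a b => δ + δ ≤ dist a b) : T.Countable := by
  have key : ∀ n m : ℕ,
      {y | y ∈ T ∧ ((m:ℝ≥0∞))⁻¹ < μ (Metric.ball y δ ∩ spanningSets μ n)}.Finite := by
    intro n m
    rcases Nat.eq_zero_or_pos m with hm | hm
    · subst hm
      convert Set.finite_empty
      ext y
      simp only [Set.mem_setOf_eq, Set.mem_empty_iff_false, iff_false, not_and]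
      intro _
      simp [not_top_lt]
    by_contra hinf
    obtain ⟨N, hN⟩ := ENNReal.exists_nat_gt
      (ENNReal.mul_ne_top (measure_spanningSets_lt_top μ n).ne (by simp) :
        μ (spanningSets μ n) * m ≠ ⊤)
    obtain ⟨F, hFsub, hFcard⟩ := Set.Infinite.exists_subset_card_eq hinf ((N+1) * m)
    have hdisj : (↑F : Set Z).PairwiseDisjoint
        (fun y => Metric.ball y δ ∩ spanningSets μ n) := by
      intro a ha b hb hab
      have h1 : a ∈ T := (hFsub ha).1
      have h2 : b ∈ T := (hFsub hb).1
      exact (Metric.ball_disjoint_ball (hT h1 h2 hab)).mono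
        Set.inter_subset_left Set.inter_subset_left
    have hsum : ∑ y ∈ F, μ (Metric.ball y δ ∩ spanningSets μ n)
        ≤ μ (spanningSets μ n) := by
      rw [← measure_biUnion_finset hdisj
        (fun b _ => measurableSet_ball.inter (measurableSet_spanningSets μ n))]
      exact measure_mono (Set.iUnion₂_subset fun y _ => Set.inter_subset_right)
    have hlb : (F.card : ℝ≥0∞) * ((m:ℝ≥0∞))⁻¹
        ≤ ∑ y ∈ F, μ (Metric.ball y δ ∩ spanningSets μ n) := by
      calc (F.card : ℝ≥0∞) * ((m:ℝ≥0∞))⁻¹ = ∑ _y ∈ F, ((m:ℝ≥0∞))⁻¹ := by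
            rw [Finset.sum_const, nsmul_eq_mul]
        _ ≤ _ := Finset.sum_le_sum fun y hy => (hFsub hy).2.le
    have hmne : (m:ℝ≥0∞) ≠ 0 := by exact_mod_cast hm.ne'
    have hcard : (F.card : ℝ≥0∞) * ((m:ℝ≥0∞))⁻¹ = (N:ℝ≥0∞) + 1 := by
      rw [hFcard]
      push_cast
      rw [mul_assoc, ENNReal.mul_inv_cancel hmne (by simp), mul_one]
    have hub : μ (spanningSets μ n) < (N:ℝ≥0∞) + 1 := by
      calc μ (spanningSets μ n) ≤ μ (spanningSets μ n) * m := by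
            nth_rewrite 1 [← mul_one (μ (spanningSets μ n))]
            exact mul_le_mul_right (by exact_mod_cast hm) _
        _ < (N:ℝ≥0∞) := hN
        _ < (N:ℝ≥0∞) + 1 := by exact ENNReal.lt_add_right (by simp) one_ne_zero
    have : (N:ℝ≥0∞) + 1 ≤ μ (spanningSets μ n) := hcard ▸ (hlb.trans hsum)
    exact absurd (this.trans_lt hub) (lt_irrefl _)
  have hsub : T ⊆ ⋃ (n : ℕ) (m : ℕ),
      {y | y ∈ T ∧ ((m:ℝ≥0∞))⁻¹ < μ (Metric.ball y δ ∩ spanningSets μ n)} := by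
    intro y hy
    have hb : 0 < μ (Metric.ball y δ) := lt_of_lt_of_le hc (hlow y)
    have hex : ∃ n : ℕ, μ (Metric.ball y δ ∩ spanningSets μ n) ≠ 0 := by
      by_contra hall
      push_neg at hall
      have hcov : Metric.ball y δ = ⋃ n, Metric.ball y δ ∩ spanningSets μ n := by
        rw [← Set.inter_iUnion, iUnion_spanningSets, Set.inter_univ]
      have hle : μ (Metric.ball y δ) ≤ ∑' n, μ (Metric.ball y δ ∩ spanningSets μ n) := by
        calc μ (Metric.ball y δ) = μ (⋃ n, Metric.ball y δ ∩ spanningSets μ n) :=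
              congrArg μ hcov
          _ ≤ ∑' n, μ (Metric.ball y δ ∩ spanningSets μ n) := measure_iUnion_le _
      simp only [hall, tsum_zero] at hle
      exact hb.ne' (le_antisymm hle (zero_le))
    obtain ⟨n, hn⟩ := hex
    obtain ⟨m, hm⟩ := ENNReal.exists_inv_nat_lt hn
    exact Set.mem_iUnion.2 ⟨n, Set.mem_iUnion.2 ⟨m, hy, hm⟩⟩
  exact Set.Countable.mono hsub
    (Set.countable_iUnion fun n => Set.countable_iUnion fun m => (key n m).countable)

private lemma secondCountable_of_ahlfors {Z : Type*} [MetricSpace Z] [MeasurableSpace Z]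
    [BorelSpace Z] (μ : Measure Z) [SigmaFinite μ] {c₁ dH : ℝ} (hc₁ : 0 < c₁)
    (hlow : ∀ (x : Z) (r : ℝ), 0 < r → ENNReal.ofReal (c₁ * r ^ dH) ≤ μ (Metric.ball x r)) :
    SecondCountableTopology Z := by
  refine Metric.secondCountable_of_almost_dense_set fun ε hε => ?_
  have hzorn : ∀ c ⊆ {S : Set Z | S.Pairwise fun a b => ε ≤ dist a b},
      IsChain (· ⊆ ·) c → ∃ ub ∈ {S : Set Z | S.Pairwise fun a b => ε ≤ dist a b},
        ∀ s ∈ c, s ⊆ ub := by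
    intro c hcS hchain
    refine ⟨⋃₀ c, ?_, fun s hs => Set.subset_sUnion_of_mem hs⟩
    intro a ha b hb hab
    obtain ⟨s, hs, has⟩ := ha
    obtain ⟨t', ht', hbt⟩ := hb
    rcases hchain.total hs ht' with hst | hst
    · exact (hcS ht') (hst has) hbt hab
    · exact (hcS hs) has (hst hbt) hab
  obtain ⟨T, hT⟩ := zorn_subset {S : Set Z | S.Pairwise fun a b => ε ≤ dist a b} hzorn
  refine ⟨T, ?_, fun x => ?_⟩
  · have hcpos : (0:ℝ≥0∞) < ENNReal.ofReal (c₁ * (ε/2) ^ dH) := by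
      rw [ENNReal.ofReal_pos]
      have : 0 < (ε/2) ^ dH := Real.rpow_pos_of_pos (half_pos hε) _
      positivity
    refine countable_of_separated μ hcpos (fun x => hlow x _ (half_pos hε)) ?_
    exact hT.1.imp fun a b hab => by linarith [add_halves ε]
  · by_contra hcon
    push_neg at hcon
    have hxT : x ∉ T := by
      intro hx
      have := hcon x hx
      rw [dist_self] at this
      linarith
    have hins : insert x T ∈ {S : Set Z | S.Pairwise fun a b => ε ≤ dist a b} := by
      simp only [Set.mem_setOf_eq]
      rw [Set.pairwise_insert]
      refine ⟨hT.1, fun b hb _ => ⟨?_, ?_⟩⟩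
      · exact (hcon b hb).le
      · rw [dist_comm]; exact (hcon b hb).le
    have hTT := hT.2 hins (Set.subset_insert x T)
    exact hxT (hTT (Set.mem_insert x T))

section ProdLemmas

variable {Z : Type*} [MetricSpace Z] [MeasurableSpace Z] [BorelSpace Z]

private lemma ball_ind_lintegral (μ : Measure Z) (ρ : ℝ) (x : Z) :
    ∫⁻ y, (if dist x y < ρ then (1:ℝ≥0∞) else 0) ∂μ = μ (Metric.ball x ρ) := by
  rw [← lintegral_indicator_one (measurableSet_ball (x := x) (ε := ρ))]
  refine lintegral_congr fun y => ?_
  by_cases h : dist x y < ρ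
  · have hy : y ∈ Metric.ball x ρ := by rwa [Metric.mem_ball, dist_comm]
    simp [h, Set.indicator_of_mem hy]
  · have hy : y ∉ Metric.ball x ρ := by rwa [Metric.mem_ball, dist_comm]
    simp [h, Set.indicator_of_notMem hy]

private lemma measurable_ball_pair [SecondCountableTopology Z] (ρ : ℝ) :
    Measurable (fun z : Z × Z => (if dist z.1 z.2 < ρ then (1:ℝ≥0∞) else 0)) := by
  have hs : MeasurableSet {z : Z × Z | dist z.1 z.2 < ρ} :=
    measurableSet_lt measurable_dist measurable_const
  exact Measurable.ite hs measurable_const measurable_const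

private lemma lintegral_swap_pair {μ : Measure Z} [SigmaFinite μ] (f : Z × Z → ℝ≥0∞) :
    ∫⁻ z : Z × Z, f (z.2, z.1) ∂(μ.prod μ) = ∫⁻ z, f z ∂(μ.prod μ) :=
  lintegral_prod_swap f

private lemma energy_le_mass {μ : Measure Z} [SigmaFinite μ]
    {K : ℝ → Z → Z → ℝ} (hK : IsHeatKernel μ K) {u v : Z → ℝ}
    (hv : Measurable v) (huv : u =ᵐ[μ] v) {t : ℝ} (ht : 0 < t) :
    ∫⁻ z : Z × Z, ENNReal.ofReal |u z.1 - u z.2| * ENNReal.ofReal (K t z.1 z.2) ∂(μ.prod μ)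
      ≤ 2 * ∫⁻ x, ENNReal.ofReal |u x| ∂μ := by
  have hfst : (fun z : Z × Z => u z.1) =ᵐ[μ.prod μ] fun z => v z.1 :=
    Measure.quasiMeasurePreserving_fst.ae_eq_comp huv
  have hsnd : (fun z : Z × Z => u z.2) =ᵐ[μ.prod μ] fun z => v z.2 :=
    Measure.quasiMeasurePreserving_snd.ae_eq_comp huv
  have hmass : ∫⁻ x, ENNReal.ofReal |u x| ∂μ = ∫⁻ x, ENNReal.ofReal |v x| ∂μ :=
    lintegral_congr_ae (huv.mono fun x hx => by simp only [hx])
  have hKm : ∀ s : ℝ, Measurable (fun z : Z × Z => ENNReal.ofReal (K s z.1 z.2)) :=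
    fun s => (hK.measurable s).ennreal_ofReal
  have hv1 : Measurable (fun z : Z × Z => ENNReal.ofReal |v z.1|) :=
    (continuous_abs.measurable.comp (hv.comp measurable_fst)).ennreal_ofReal
  have hT1 : ∫⁻ z : Z × Z, ENNReal.ofReal |v z.1| * ENNReal.ofReal (K t z.1 z.2) ∂(μ.prod μ)
      = ∫⁻ x, ENNReal.ofReal |v x| ∂μ := by
    rw [lintegral_prod (fun z : Z × Z => ENNReal.ofReal |v z.1| * ENNReal.ofReal (K t z.1 z.2)) (hv1.mul (hKm t)).aemeasurable]
    calc ∫⁻ x, ∫⁻ y, ENNReal.ofReal |v x| * ENNReal.ofReal (K t x y) ∂μ ∂μ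
        = ∫⁻ x, ENNReal.ofReal |v x| * ∫⁻ y, ENNReal.ofReal (K t x y) ∂μ ∂μ :=
          lintegral_congr fun x => lintegral_const_mul' _ _ ENNReal.ofReal_ne_top
      _ = ∫⁻ x, ENNReal.ofReal |v x| ∂μ := by
          refine lintegral_congr_ae ?_
          filter_upwards [cons_lintegral hK ht] with x hx
          rw [hx, mul_one]
  have hT2 : ∫⁻ z : Z × Z, ENNReal.ofReal |v z.2| * ENNReal.ofReal (K t z.1 z.2) ∂(μ.prod μ)
      = ∫⁻ x, ENNReal.ofReal |v x| ∂μ := by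
    have hsw : ∫⁻ z : Z × Z, ENNReal.ofReal |v z.2| * ENNReal.ofReal (K t z.1 z.2) ∂(μ.prod μ)
        = ∫⁻ z : Z × Z, ENNReal.ofReal |v z.1| * ENNReal.ofReal (K t z.1 z.2) ∂(μ.prod μ) := by
      calc ∫⁻ z : Z × Z, ENNReal.ofReal |v z.2| * ENNReal.ofReal (K t z.1 z.2) ∂(μ.prod μ)
          = ∫⁻ z : Z × Z, (fun w : Z × Z =>
              ENNReal.ofReal |v w.1| * ENNReal.ofReal (K t w.2 w.1)) (z.2, z.1) ∂(μ.prod μ) := rfl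
        _ = ∫⁻ w : Z × Z, ENNReal.ofReal |v w.1| * ENNReal.ofReal (K t w.2 w.1) ∂(μ.prod μ) :=
            lintegral_swap_pair (fun w : Z × Z =>
              ENNReal.ofReal |v w.1| * ENNReal.ofReal (K t w.2 w.1))
        _ = _ := lintegral_congr fun w => by rw [hK.symm t w.2 w.1]
    rw [hsw]; exact hT1
  calc ∫⁻ z : Z × Z, ENNReal.ofReal |u z.1 - u z.2| * ENNReal.ofReal (K t z.1 z.2) ∂(μ.prod μ)
      = ∫⁻ z : Z × Z, ENNReal.ofReal |v z.1 - v z.2| * ENNReal.ofReal (K t z.1 z.2) ∂(μ.prod μ) := by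
        refine lintegral_congr_ae ?_
        filter_upwards [hfst, hsnd] with z h1 h2
        rw [h1, h2]
    _ ≤ ∫⁻ z : Z × Z, (ENNReal.ofReal |v z.1| + ENNReal.ofReal |v z.2|)
          * ENNReal.ofReal (K t z.1 z.2) ∂(μ.prod μ) := by
        refine lintegral_mono fun z => mul_le_mul_left ?_ _
        rw [← ENNReal.ofReal_add (abs_nonneg _) (abs_nonneg _)]
        exact ENNReal.ofReal_le_ofReal (abs_sub_le_abs_add_abs' _ _)
    _ = (∫⁻ z : Z × Z, ENNReal.ofReal |v z.1| * ENNReal.ofReal (K t z.1 z.2) ∂(μ.prod μ))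
        + ∫⁻ z : Z × Z, ENNReal.ofReal |v z.2| * ENNReal.ofReal (K t z.1 z.2) ∂(μ.prod μ) := by
        simp_rw [add_mul]
        exact lintegral_add_left' (hv1.mul (hKm t)).aemeasurable _
    _ = 2 * ∫⁻ x, ENNReal.ofReal |u x| ∂μ := by
        rw [hT1, hT2, hmass, two_mul]

private lemma trunc_le_mass {μ : Measure Z} [SigmaFinite μ] [SecondCountableTopology Z]
    {c₂ dH : ℝ}
    (hup : ∀ (x : Z) (r : ℝ), 0 < r → μ (Metric.ball x r) ≤ ENNReal.ofReal (c₂ * r ^ dH))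
    {u v : Z → ℝ} (hv : Measurable v) (huv : u =ᵐ[μ] v) {ρ : ℝ} (hρ : 0 < ρ) :
    ∫⁻ z : Z × Z, ENNReal.ofReal |u z.1 - u z.2|
        * (if dist z.1 z.2 < ρ then (1:ℝ≥0∞) else 0) ∂(μ.prod μ)
      ≤ ENNReal.ofReal (2 * (c₂ * ρ ^ dH)) * ∫⁻ x, ENNReal.ofReal |u x| ∂μ := by
  have hfst : (fun z : Z × Z => u z.1) =ᵐ[μ.prod μ] fun z => v z.1 :=
    Measure.quasiMeasurePreserving_fst.ae_eq_comp huv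
  have hsnd : (fun z : Z × Z => u z.2) =ᵐ[μ.prod μ] fun z => v z.2 :=
    Measure.quasiMeasurePreserving_snd.ae_eq_comp huv
  have hmass : ∫⁻ x, ENNReal.ofReal |u x| ∂μ = ∫⁻ x, ENNReal.ofReal |v x| ∂μ :=
    lintegral_congr_ae (huv.mono fun x hx => by simp only [hx])
  have hWm := measurable_ball_pair (Z := Z) ρ
  have hv1 : Measurable (fun z : Z × Z => ENNReal.ofReal |v z.1|) :=
    (continuous_abs.measurable.comp (hv.comp measurable_fst)).ennreal_ofReal
  have hT1 : ∫⁻ z : Z × Z, ENNReal.ofReal |v z.1|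
        * (if dist z.1 z.2 < ρ then (1:ℝ≥0∞) else 0) ∂(μ.prod μ)
      ≤ ENNReal.ofReal (c₂ * ρ ^ dH) * ∫⁻ x, ENNReal.ofReal |v x| ∂μ := by
    rw [lintegral_prod (fun z : Z × Z => ENNReal.ofReal |v z.1| * (if dist z.1 z.2 < ρ then (1:ℝ≥0∞) else 0)) (hv1.mul hWm).aemeasurable]
    calc ∫⁻ x, ∫⁻ y, ENNReal.ofReal |v x| * (if dist x y < ρ then (1:ℝ≥0∞) else 0) ∂μ ∂μ
        = ∫⁻ x, ENNReal.ofReal |v x| * μ (Metric.ball x ρ) ∂μ := by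
          refine lintegral_congr fun x => ?_
          rw [lintegral_const_mul' _ _ ENNReal.ofReal_ne_top, ball_ind_lintegral μ ρ x]
      _ ≤ ∫⁻ x, ENNReal.ofReal (c₂ * ρ ^ dH) * ENNReal.ofReal |v x| ∂μ := by
          refine lintegral_mono fun x => ?_
          rw [mul_comm (ENNReal.ofReal (c₂ * ρ ^ dH))]
          exact mul_le_mul_right (hup x ρ hρ) _
      _ = ENNReal.ofReal (c₂ * ρ ^ dH) * ∫⁻ x, ENNReal.ofReal |v x| ∂μ :=
          lintegral_const_mul' _ _ ENNReal.ofReal_ne_top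
  have hT2 : ∫⁻ z : Z × Z, ENNReal.ofReal |v z.2|
        * (if dist z.1 z.2 < ρ then (1:ℝ≥0∞) else 0) ∂(μ.prod μ)
      ≤ ENNReal.ofReal (c₂ * ρ ^ dH) * ∫⁻ x, ENNReal.ofReal |v x| ∂μ := by
    have hsw : ∫⁻ z : Z × Z, ENNReal.ofReal |v z.2|
          * (if dist z.1 z.2 < ρ then (1:ℝ≥0∞) else 0) ∂(μ.prod μ)
        = ∫⁻ z : Z × Z, ENNReal.ofReal |v z.1|
          * (if dist z.1 z.2 < ρ then (1:ℝ≥0∞) else 0) ∂(μ.prod μ) := by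
      calc ∫⁻ z : Z × Z, ENNReal.ofReal |v z.2|
            * (if dist z.1 z.2 < ρ then (1:ℝ≥0∞) else 0) ∂(μ.prod μ)
          = ∫⁻ z : Z × Z, (fun w : Z × Z => ENNReal.ofReal |v w.1|
              * (if dist w.2 w.1 < ρ then (1:ℝ≥0∞) else 0)) (z.2, z.1) ∂(μ.prod μ) := rfl
        _ = ∫⁻ w : Z × Z, ENNReal.ofReal |v w.1|
              * (if dist w.2 w.1 < ρ then (1:ℝ≥0∞) else 0) ∂(μ.prod μ) :=
            lintegral_swap_pair (fun w : Z × Z => ENNReal.ofReal |v w.1|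
              * (if dist w.2 w.1 < ρ then (1:ℝ≥0∞) else 0))
        _ = _ := lintegral_congr fun w => by rw [dist_comm w.2 w.1]
    rw [hsw]; exact hT1
  calc ∫⁻ z : Z × Z, ENNReal.ofReal |u z.1 - u z.2|
        * (if dist z.1 z.2 < ρ then (1:ℝ≥0∞) else 0) ∂(μ.prod μ)
      = ∫⁻ z : Z × Z, ENNReal.ofReal |v z.1 - v z.2|
        * (if dist z.1 z.2 < ρ then (1:ℝ≥0∞) else 0) ∂(μ.prod μ) := by
        refine lintegral_congr_ae ?_
        filter_upwards [hfst, hsnd] with z h1 h2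
        rw [h1, h2]
    _ ≤ ∫⁻ z : Z × Z, (ENNReal.ofReal |v z.1| + ENNReal.ofReal |v z.2|)
          * (if dist z.1 z.2 < ρ then (1:ℝ≥0∞) else 0) ∂(μ.prod μ) := by
        refine lintegral_mono fun z => mul_le_mul_left ?_ _
        rw [← ENNReal.ofReal_add (abs_nonneg _) (abs_nonneg _)]
        exact ENNReal.ofReal_le_ofReal (abs_sub_le_abs_add_abs' _ _)
    _ = (∫⁻ z : Z × Z, ENNReal.ofReal |v z.1|
          * (if dist z.1 z.2 < ρ then (1:ℝ≥0∞) else 0) ∂(μ.prod μ))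
        + ∫⁻ z : Z × Z, ENNReal.ofReal |v z.2|
          * (if dist z.1 z.2 < ρ then (1:ℝ≥0∞) else 0) ∂(μ.prod μ) := by
        simp_rw [add_mul]
        exact lintegral_add_left' (hv1.mul hWm).aemeasurable _
    _ ≤ ENNReal.ofReal (c₂ * ρ ^ dH) * (∫⁻ x, ENNReal.ofReal |v x| ∂μ)
        + ENNReal.ofReal (c₂ * ρ ^ dH) * ∫⁻ x, ENNReal.ofReal |v x| ∂μ := add_le_add hT1 hT2
    _ = ENNReal.ofReal (2 * (c₂ * ρ ^ dH)) * ∫⁻ x, ENNReal.ofReal |u x| ∂μ := by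
        rw [hmass, ENNReal.ofReal_mul (by norm_num : (0:ℝ) ≤ 2), ENNReal.ofReal_ofNat,
          two_mul, add_mul]

private lemma trunc_le_layer {μ : Measure Z} [SigmaFinite μ] [SecondCountableTopology Z]
    {c₂ dH : ℝ}
    (hup : ∀ (x : Z) (r : ℝ), 0 < r → μ (Metric.ball x r) ≤ ENNReal.ofReal (c₂ * r ^ dH))
    {u v : Z → ℝ} (hv : Measurable v) (huv : u =ᵐ[μ] v) {ρ : ℝ} (hρ : 0 < ρ) :
    ∫⁻ z : Z × Z, ENNReal.ofReal |u z.1 - u z.2|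
        * (if dist z.1 z.2 < ρ then (1:ℝ≥0∞) else 0) ∂(μ.prod μ)
      ≤ ENNReal.ofReal (2 * (c₂ * ρ ^ dH)) *
          ∫⁻ s : ℝ, μ {x | s < u x ∧ Metric.infDist x {y | s < u y}ᶜ < ρ} := by
  have hfst : (fun z : Z × Z => u z.1) =ᵐ[μ.prod μ] fun z => v z.1 :=
    Measure.quasiMeasurePreserving_fst.ae_eq_comp huv
  have hsnd : (fun z : Z × Z => u z.2) =ᵐ[μ.prod μ] fun z => v z.2 :=
    Measure.quasiMeasurePreserving_snd.ae_eq_comp huv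
  have hWm := measurable_ball_pair (Z := Z) ρ
  -- step 1-2 : rewrite the integrand via the coarea strip
  have step12 : ∫⁻ z : Z × Z, ENNReal.ofReal |u z.1 - u z.2|
        * (if dist z.1 z.2 < ρ then (1:ℝ≥0∞) else 0) ∂(μ.prod μ)
      = ∫⁻ z : Z × Z, ∫⁻ s : ℝ,
          (Set.Ico (u z.1 ⊓ u z.2) (u z.1 ⊔ u z.2)).indicator (fun _ => (1:ℝ≥0∞)) s
            * (if dist z.1 z.2 < ρ then (1:ℝ≥0∞) else 0) ∂(volume) ∂(μ.prod μ) := by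
    refine lintegral_congr fun z => ?_
    by_cases h : dist z.1 z.2 < ρ
    · simp only [h, if_true, mul_one]
      exact (lintegral_strip (u z.1) (u z.2)).symm
    · simp [h]
  -- measurability of the (v-version of the) double integrand, and swap
  have hswap : ∫⁻ z : Z × Z, ∫⁻ s : ℝ,
          (Set.Ico (u z.1 ⊓ u z.2) (u z.1 ⊔ u z.2)).indicator (fun _ => (1:ℝ≥0∞)) s
            * (if dist z.1 z.2 < ρ then (1:ℝ≥0∞) else 0) ∂(volume) ∂(μ.prod μ)
      = ∫⁻ s : ℝ, ∫⁻ z : Z × Z,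
          (Set.Ico (u z.1 ⊓ u z.2) (u z.1 ⊔ u z.2)).indicator (fun _ => (1:ℝ≥0∞)) s
            * (if dist z.1 z.2 < ρ then (1:ℝ≥0∞) else 0) ∂(μ.prod μ) ∂(volume) := by
    refine lintegral_lintegral_swap ?_
    have hSm : MeasurableSet {p : (Z × Z) × ℝ |
        v p.1.1 ⊓ v p.1.2 ≤ p.2 ∧ p.2 < v p.1.1 ⊔ v p.1.2} := by
      refine MeasurableSet.inter ?_ ?_
      · exact measurableSet_le
          (((hv.comp (measurable_fst.comp measurable_fst)).min
            (hv.comp (measurable_snd.comp measurable_fst)))) measurable_snd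
      · exact measurableSet_lt measurable_snd
          (((hv.comp (measurable_fst.comp measurable_fst)).max
            (hv.comp (measurable_snd.comp measurable_fst))))
    have hmv : Measurable (fun p : (Z × Z) × ℝ =>
        (Set.Ico (v p.1.1 ⊓ v p.1.2) (v p.1.1 ⊔ v p.1.2)).indicator (fun _ => (1:ℝ≥0∞)) p.2
          * (if dist p.1.1 p.1.2 < ρ then (1:ℝ≥0∞) else 0)) := by
      have h1 : (fun p : (Z × Z) × ℝ =>
          (Set.Ico (v p.1.1 ⊓ v p.1.2) (v p.1.1 ⊔ v p.1.2)).indicator (fun _ => (1:ℝ≥0∞)) p.2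
            * (if dist p.1.1 p.1.2 < ρ then (1:ℝ≥0∞) else 0))
          = (fun p : (Z × Z) × ℝ =>
            ({q : (Z × Z) × ℝ | v q.1.1 ⊓ v q.1.2 ≤ q.2 ∧ q.2 < v q.1.1 ⊔ v q.1.2}).indicator
              (fun _ => (1:ℝ≥0∞)) p * (if dist p.1.1 p.1.2 < ρ then (1:ℝ≥0∞) else 0)) := by
        funext p
        simp only [Set.indicator_apply, Set.mem_Ico, Set.mem_setOf_eq]
      rw [h1]
      exact (measurable_const.indicator hSm).mul (hWm.comp measurable_fst)
    have h11 : (fun p : (Z × Z) × ℝ => u p.1.1) =ᵐ[(μ.prod μ).prod volume] fun p => v p.1.1 :=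
      Measure.quasiMeasurePreserving_fst.ae_eq_comp hfst
    have h12 : (fun p : (Z × Z) × ℝ => u p.1.2) =ᵐ[(μ.prod μ).prod volume] fun p => v p.1.2 :=
      Measure.quasiMeasurePreserving_fst.ae_eq_comp hsnd
    refine hmv.aemeasurable.congr ?_
    filter_upwards [h11, h12] with p e1 e2
    simp only [Function.uncurry]
    rw [e1, e2]
  -- step 4 : per-level bound
  have step4 : ∀ s : ℝ, ∫⁻ z : Z × Z,
        (Set.Ico (u z.1 ⊓ u z.2) (u z.1 ⊔ u z.2)).indicator (fun _ => (1:ℝ≥0∞)) s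
          * (if dist z.1 z.2 < ρ then (1:ℝ≥0∞) else 0) ∂(μ.prod μ)
      ≤ ENNReal.ofReal (c₂ * ρ ^ dH) * μ {x | s < u x ∧ Metric.infDist x {y | s < u y}ᶜ < ρ}
        + ENNReal.ofReal (c₂ * ρ ^ dH) * μ {x | s < u x ∧ Metric.infDist x {y | s < u y}ᶜ < ρ} := by
    intro s
    set L : Set Z := {x | s < u x ∧ Metric.infDist x {y | s < u y}ᶜ < ρ} with hL
    set M : Set Z := toMeasurable μ L with hM
    have hLM : L ⊆ M := subset_toMeasurable μ L
    have hMm : MeasurableSet M := measurableSet_toMeasurable μ L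
    have hMne : ∀ x : Z, M.indicator (fun _ => (1:ℝ≥0∞)) x ≠ ⊤ := by
      intro x; by_cases hx : x ∈ M <;> simp [hx]
    have hpt : ∀ z : Z × Z,
        (Set.Ico (u z.1 ⊓ u z.2) (u z.1 ⊔ u z.2)).indicator (fun _ => (1:ℝ≥0∞)) s
          * (if dist z.1 z.2 < ρ then (1:ℝ≥0∞) else 0)
        ≤ M.indicator (fun _ => (1:ℝ≥0∞)) z.1 * (if dist z.1 z.2 < ρ then (1:ℝ≥0∞) else 0)
          + M.indicator (fun _ => (1:ℝ≥0∞)) z.2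
            * (if dist z.1 z.2 < ρ then (1:ℝ≥0∞) else 0) := by
      intro z
      by_cases hW : dist z.1 z.2 < ρ
      · simp only [hW, if_true, mul_one]
        by_cases hχ : s ∈ Set.Ico (u z.1 ⊓ u z.2) (u z.1 ⊔ u z.2)
        · rw [Set.indicator_of_mem hχ]
          rcases (strip_iff' (u z.1) (u z.2) s).1 hχ with ⟨h1, h2⟩ | ⟨h1, h2⟩
          · have hz1 : z.1 ∈ L := by
              refine ⟨h1, lt_of_le_of_lt (Metric.infDist_le_dist_of_mem ?_) hW⟩
              simpa using h2
            calc (1:ℝ≥0∞) = M.indicator (fun _ => (1:ℝ≥0∞)) z.1 :=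
                  (Set.indicator_of_mem (hLM hz1) (fun _ => (1:ℝ≥0∞))).symm
              _ ≤ _ := le_self_add
          · have hz2 : z.2 ∈ L := by
              refine ⟨h1, lt_of_le_of_lt (Metric.infDist_le_dist_of_mem (y := z.1) ?_) ?_⟩
              · simpa using h2
              · rwa [dist_comm]
            calc (1:ℝ≥0∞) = M.indicator (fun _ => (1:ℝ≥0∞)) z.2 :=
                  (Set.indicator_of_mem (hLM hz2) (fun _ => (1:ℝ≥0∞))).symm
              _ ≤ _ := le_add_self
        · rw [Set.indicator_of_notMem hχ]
          exact zero_le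
      · simp [hW]
    have hF1 : ∫⁻ z : Z × Z, M.indicator (fun _ => (1:ℝ≥0∞)) z.1
          * (if dist z.1 z.2 < ρ then (1:ℝ≥0∞) else 0) ∂(μ.prod μ)
        ≤ ENNReal.ofReal (c₂ * ρ ^ dH) * μ L := by
      have hFm : Measurable (fun z : Z × Z => M.indicator (fun _ => (1:ℝ≥0∞)) z.1
          * (if dist z.1 z.2 < ρ then (1:ℝ≥0∞) else 0)) :=
        ((measurable_const.indicator hMm).comp measurable_fst).mul hWm
      rw [lintegral_prod _ hFm.aemeasurable]
      calc ∫⁻ x, ∫⁻ y, M.indicator (fun _ => (1:ℝ≥0∞)) x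
            * (if dist x y < ρ then (1:ℝ≥0∞) else 0) ∂μ ∂μ
          = ∫⁻ x, M.indicator (fun _ => (1:ℝ≥0∞)) x * μ (Metric.ball x ρ) ∂μ := by
            refine lintegral_congr fun x => ?_
            rw [lintegral_const_mul' _ _ (hMne x), ball_ind_lintegral μ ρ x]
        _ ≤ ∫⁻ x, M.indicator (fun _ => ENNReal.ofReal (c₂ * ρ ^ dH)) x ∂μ := by
            refine lintegral_mono fun x => ?_
            by_cases hx : x ∈ M
            · rw [Set.indicator_of_mem hx, Set.indicator_of_mem hx, one_mul]
              exact hup x ρ hρ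
            · rw [Set.indicator_of_notMem hx, Set.indicator_of_notMem hx, zero_mul]
        _ = ENNReal.ofReal (c₂ * ρ ^ dH) * μ M := lintegral_indicator_const hMm _
        _ = ENNReal.ofReal (c₂ * ρ ^ dH) * μ L := by rw [hM, measure_toMeasurable]
    have hF2 : ∫⁻ z : Z × Z, M.indicator (fun _ => (1:ℝ≥0∞)) z.2
          * (if dist z.1 z.2 < ρ then (1:ℝ≥0∞) else 0) ∂(μ.prod μ)
        ≤ ENNReal.ofReal (c₂ * ρ ^ dH) * μ L := by
      have hsw : ∫⁻ z : Z × Z, M.indicator (fun _ => (1:ℝ≥0∞)) z.2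
            * (if dist z.1 z.2 < ρ then (1:ℝ≥0∞) else 0) ∂(μ.prod μ)
          = ∫⁻ z : Z × Z, M.indicator (fun _ => (1:ℝ≥0∞)) z.1
            * (if dist z.1 z.2 < ρ then (1:ℝ≥0∞) else 0) ∂(μ.prod μ) := by
        calc ∫⁻ z : Z × Z, M.indicator (fun _ => (1:ℝ≥0∞)) z.2
              * (if dist z.1 z.2 < ρ then (1:ℝ≥0∞) else 0) ∂(μ.prod μ)
            = ∫⁻ z : Z × Z, (fun w : Z × Z => M.indicator (fun _ => (1:ℝ≥0∞)) w.1
                * (if dist w.2 w.1 < ρ then (1:ℝ≥0∞) else 0)) (z.2, z.1) ∂(μ.prod μ) := rfl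
          _ = ∫⁻ w : Z × Z, M.indicator (fun _ => (1:ℝ≥0∞)) w.1
                * (if dist w.2 w.1 < ρ then (1:ℝ≥0∞) else 0) ∂(μ.prod μ) :=
              lintegral_swap_pair (fun w : Z × Z => M.indicator (fun _ => (1:ℝ≥0∞)) w.1
                * (if dist w.2 w.1 < ρ then (1:ℝ≥0∞) else 0))
          _ = _ := lintegral_congr fun w => by rw [dist_comm w.2 w.1]
      rw [hsw]; exact hF1
    calc ∫⁻ z : Z × Z,
        (Set.Ico (u z.1 ⊓ u z.2) (u z.1 ⊔ u z.2)).indicator (fun _ => (1:ℝ≥0∞)) s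
          * (if dist z.1 z.2 < ρ then (1:ℝ≥0∞) else 0) ∂(μ.prod μ)
        ≤ ∫⁻ z : Z × Z, (M.indicator (fun _ => (1:ℝ≥0∞)) z.1
            * (if dist z.1 z.2 < ρ then (1:ℝ≥0∞) else 0)
          + M.indicator (fun _ => (1:ℝ≥0∞)) z.2
            * (if dist z.1 z.2 < ρ then (1:ℝ≥0∞) else 0)) ∂(μ.prod μ) :=
          lintegral_mono hpt
      _ = (∫⁻ z : Z × Z, M.indicator (fun _ => (1:ℝ≥0∞)) z.1
            * (if dist z.1 z.2 < ρ then (1:ℝ≥0∞) else 0) ∂(μ.prod μ))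
          + ∫⁻ z : Z × Z, M.indicator (fun _ => (1:ℝ≥0∞)) z.2
            * (if dist z.1 z.2 < ρ then (1:ℝ≥0∞) else 0) ∂(μ.prod μ) :=
          lintegral_add_left' (((measurable_const.indicator hMm).comp measurable_fst).mul
            hWm).aemeasurable _
      _ ≤ _ := add_le_add hF1 hF2
  -- put everything together
  calc ∫⁻ z : Z × Z, ENNReal.ofReal |u z.1 - u z.2|
        * (if dist z.1 z.2 < ρ then (1:ℝ≥0∞) else 0) ∂(μ.prod μ)
      = ∫⁻ s : ℝ, ∫⁻ z : Z × Z,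
          (Set.Ico (u z.1 ⊓ u z.2) (u z.1 ⊔ u z.2)).indicator (fun _ => (1:ℝ≥0∞)) s
            * (if dist z.1 z.2 < ρ then (1:ℝ≥0∞) else 0) ∂(μ.prod μ) ∂(volume) := by
        rw [step12, hswap]
    _ ≤ ∫⁻ s : ℝ, (ENNReal.ofReal (c₂ * ρ ^ dH)
          * μ {x | s < u x ∧ Metric.infDist x {y | s < u y}ᶜ < ρ}
        + ENNReal.ofReal (c₂ * ρ ^ dH)
          * μ {x | s < u x ∧ Metric.infDist x {y | s < u y}ᶜ < ρ}) ∂(volume) :=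
        lintegral_mono step4
    _ = ∫⁻ s : ℝ, ENNReal.ofReal (2 * (c₂ * ρ ^ dH))
          * μ {x | s < u x ∧ Metric.infDist x {y | s < u y}ᶜ < ρ} ∂(volume) := by
        refine lintegral_congr fun s => ?_
        rw [ENNReal.ofReal_mul (by norm_num : (0:ℝ) ≤ 2), ENNReal.ofReal_ofNat, two_mul,
          add_mul]
    _ = ENNReal.ofReal (2 * (c₂ * ρ ^ dH)) *
          ∫⁻ s : ℝ, μ {x | s < u x ∧ Metric.infDist x {y | s < u y}ᶜ < ρ} :=
        lintegral_const_mul' _ _ ENNReal.ofReal_ne_top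

end ProdLemmas

section KernelLemmas

private lemma kernel_pointwise {c₃ c₄ dH dW t d w : ℝ} (hdW : 1 < dW) (hc₃ : 0 ≤ c₃)
    (hc₄ : 0 < c₄) (ht : 0 < t) (hd : 0 ≤ d)
    (hw : w ≤ c₃ * t ^ (-(dH / dW)) * Real.exp (-c₄ * (d ^ dW / t) ^ (1 / (dW - 1)))) :
    ENNReal.ofReal w ≤ ENNReal.ofReal (c₃ * t ^ (-(dH / dW))) *
      ((if d < t ^ (1/dW) then (1:ℝ≥0∞) else 0) +
        ∑' k : ℕ, ENNReal.ofReal (Real.exp (-(c₄ * 2 ^ k))) *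
          (if d < 2 ^ (k+1) * t ^ (1/dW) then (1:ℝ≥0∞) else 0)) := by
  have hdW0 : (0:ℝ) < dW := lt_trans one_pos hdW
  have hc : 0 ≤ c₃ * t ^ (-(dH / dW)) := by positivity
  have hr₀pos : 0 < t ^ (1/dW) := Real.rpow_pos_of_pos ht _
  have harg : 0 ≤ (d ^ dW / t) ^ (1/(dW-1)) :=
    Real.rpow_nonneg (div_nonneg (Real.rpow_nonneg hd _) ht.le) _
  by_cases hlt : d < t ^ (1/dW)
  · have h1 : ENNReal.ofReal w ≤ ENNReal.ofReal (c₃ * t ^ (-(dH / dW))) := by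
      apply ENNReal.ofReal_le_ofReal
      calc w ≤ _ := hw
        _ ≤ c₃ * t ^ (-(dH / dW)) * 1 := by
            refine mul_le_mul_of_nonneg_left ?_ hc
            refine Real.exp_le_one_iff.2 ?_
            exact mul_nonpos_iff.2 (Or.inr ⟨neg_nonpos.2 hc₄.le, harg⟩)
        _ = c₃ * t ^ (-(dH / dW)) := mul_one _
    calc ENNReal.ofReal w ≤ ENNReal.ofReal (c₃ * t ^ (-(dH / dW))) * 1 := by
          rw [mul_one]; exact h1
      _ ≤ _ := by
          refine mul_le_mul_right ?_ _
          calc (1:ℝ≥0∞) = (if d < t ^ (1/dW) then (1:ℝ≥0∞) else 0) := by rw [if_pos hlt]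
            _ ≤ _ := le_self_add
  · push_neg at hlt
    have hd0 : 0 < d := lt_of_lt_of_le hr₀pos hlt
    have hdr : 1 ≤ d / t ^ (1/dW) := (one_le_div hr₀pos).2 hlt
    have hdrpos : 0 < d / t ^ (1/dW) := lt_of_lt_of_le one_pos hdr
    set k := ⌊Real.logb 2 (d / t ^ (1/dW))⌋₊ with hk
    have hlogb0 : 0 ≤ Real.logb 2 (d / t ^ (1/dW)) := Real.logb_nonneg (by norm_num : (1:ℝ) < 2) hdr
    have h2k : (2:ℝ) ^ (k:ℝ) ≤ d / t ^ (1/dW) := by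
      rw [← Real.le_logb_iff_rpow_le (by norm_num : (1:ℝ) < 2) hdrpos]
      exact Nat.floor_le hlogb0
    have h2k' : d / t ^ (1/dW) < (2:ℝ) ^ ((k:ℝ) + 1) := by
      rw [← Real.logb_lt_iff_lt_rpow (by norm_num : (1:ℝ) < 2) hdrpos, hk]
      exact Nat.lt_floor_add_one _
    have hdlt : d < 2 ^ (k+1) * t ^ (1/dW) := by
      have h3 : d < (2:ℝ) ^ ((k:ℝ)+1) * t ^ (1/dW) := by
        rwa [div_lt_iff₀ hr₀pos] at h2k'
      calc d < (2:ℝ) ^ ((k:ℝ)+1) * t ^ (1/dW) := h3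
        _ = 2 ^ (k+1) * t ^ (1/dW) := by
            rw [show ((k:ℝ)+1) = ((k+1 : ℕ):ℝ) by push_cast; ring, Real.rpow_natCast]
    have hexp : Real.exp (-c₄ * (d ^ dW / t) ^ (1/(dW-1))) ≤ Real.exp (-(c₄ * 2 ^ k)) := by
      apply Real.exp_le_exp.2
      have key : (2:ℝ) ^ (k:ℕ) ≤ (d ^ dW / t) ^ (1/(dW-1)) := by
        have hdge : (2:ℝ) ^ (k:ℝ) * t ^ (1/dW) ≤ d := by
          rwa [← le_div_iff₀ hr₀pos]
        have h1 : ((2:ℝ) ^ (k:ℝ) * t ^ (1/dW)) ^ dW ≤ d ^ dW :=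
          Real.rpow_le_rpow (mul_nonneg (Real.rpow_nonneg (by norm_num) _)
            (Real.rpow_nonneg ht.le _)) hdge hdW0.le
        have h2 : ((2:ℝ) ^ (k:ℝ) * t ^ (1/dW)) ^ dW = 2 ^ ((k:ℝ) * dW) * t := by
          rw [Real.mul_rpow (by positivity) hr₀pos.le, ← Real.rpow_mul (by norm_num : (0:ℝ) ≤ 2),
            ← Real.rpow_mul ht.le, one_div_mul_cancel hdW0.ne', Real.rpow_one]
        have h3 : (2:ℝ) ^ ((k:ℝ) * dW) ≤ d ^ dW / t := by
          rw [le_div_iff₀ ht]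
          calc (2:ℝ) ^ ((k:ℝ)*dW) * t = ((2:ℝ) ^ (k:ℝ) * t ^ (1/dW)) ^ dW := h2.symm
            _ ≤ d ^ dW := h1
        calc ((2:ℝ) ^ (k:ℕ) : ℝ) = (2:ℝ) ^ ((k:ℕ):ℝ) := (Real.rpow_natCast 2 k).symm
          _ ≤ (2:ℝ) ^ (((k:ℝ) * dW) * (1/(dW-1))) := by
              refine (Real.rpow_le_rpow_left_iff (by norm_num : (1:ℝ) < 2)).2 ?_
              have hfrac : 1 ≤ dW * (1/(dW-1)) := by
                rw [mul_one_div, le_div_iff₀ (by linarith : (0:ℝ) < dW - 1)]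
                linarith
              calc ((k:ℕ):ℝ) = (k:ℝ) * 1 := (mul_one _).symm
                _ ≤ (k:ℝ) * (dW * (1/(dW-1))) :=
                    mul_le_mul_of_nonneg_left hfrac (Nat.cast_nonneg k)
                _ = ((k:ℝ) * dW) * (1/(dW-1)) := by ring
          _ = ((2:ℝ) ^ ((k:ℝ) * dW)) ^ (1/(dW-1)) := Real.rpow_mul (by norm_num) _ _
          _ ≤ (d ^ dW / t) ^ (1/(dW-1)) :=
              Real.rpow_le_rpow (Real.rpow_nonneg (by norm_num) _) h3
                (le_of_lt (one_div_pos.2 (by linarith)))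
      have := mul_le_mul_of_nonneg_left key hc₄.le
      linarith
    calc ENNReal.ofReal w
        ≤ ENNReal.ofReal (c₃ * t ^ (-(dH / dW)) * Real.exp (-(c₄ * 2 ^ k))) := by
          apply ENNReal.ofReal_le_ofReal
          calc w ≤ _ := hw
            _ ≤ _ := mul_le_mul_of_nonneg_left hexp hc
      _ = ENNReal.ofReal (c₃ * t ^ (-(dH / dW))) * ENNReal.ofReal (Real.exp (-(c₄ * 2 ^ k))) :=
          ENNReal.ofReal_mul hc
      _ ≤ _ := by
          refine mul_le_mul_right ?_ _
          calc ENNReal.ofReal (Real.exp (-(c₄ * 2 ^ k)))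
              = ENNReal.ofReal (Real.exp (-(c₄ * 2 ^ k)))
                * (if d < 2 ^ (k+1) * t ^ (1/dW) then (1:ℝ≥0∞) else 0) := by
                rw [if_pos hdlt, mul_one]
            _ ≤ ∑' j : ℕ, ENNReal.ofReal (Real.exp (-(c₄ * 2 ^ j)))
                * (if d < 2 ^ (j+1) * t ^ (1/dW) then (1:ℝ≥0∞) else 0) :=
                ENNReal.le_tsum k
            _ ≤ _ := le_add_self

private lemma summable_aux {β c₄ : ℝ} (hc₄ : 0 < c₄) :
    Summable (fun k : ℕ => (2:ℝ) ^ (β * ((k:ℝ)+1)) * Real.exp (-(c₄ * 2 ^ k))) := by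
  apply summable_of_ratio_norm_eventually_le (r := 1/2) (by norm_num)
  have htend : Filter.Tendsto (fun k : ℕ => (2:ℝ) ^ β * Real.exp (-(c₄ * 2 ^ k)))
      Filter.atTop (nhds 0) := by
    have h1 : Filter.Tendsto (fun k : ℕ => c₄ * (2:ℝ) ^ k) Filter.atTop Filter.atTop :=
      (tendsto_pow_atTop_atTop_of_one_lt (by norm_num : (1:ℝ) < 2)).const_mul_atTop hc₄
    have h2 : Filter.Tendsto (fun k : ℕ => Real.exp (-(c₄ * 2 ^ k)))
        Filter.atTop (nhds 0) := Real.tendsto_exp_neg_atTop_nhds_zero.comp h1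
    have h3 := h2.const_mul ((2:ℝ) ^ β)
    simpa using h3
  filter_upwards [htend.eventually (eventually_le_nhds (by norm_num : (0:ℝ) < 1/2))] with k hk
  have e1 : (2:ℝ) ^ (β * ((↑(k+1):ℝ)+1)) = (2:ℝ) ^ (β * ((k:ℝ)+1)) * (2:ℝ) ^ β := by
    rw [← Real.rpow_add (by norm_num : (0:ℝ) < 2)]
    congr 1
    push_cast
    ring
  have e2 : Real.exp (-(c₄ * 2 ^ (k+1))) = Real.exp (-(c₄ * 2 ^ k)) * Real.exp (-(c₄ * 2 ^ k)) := by
    rw [← Real.exp_add]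
    congr 1
    rw [pow_succ]
    ring
  rw [Real.norm_eq_abs, Real.norm_eq_abs, abs_of_nonneg (by positivity),
    abs_of_nonneg (by positivity)]
  calc (2:ℝ) ^ (β * ((↑(k+1):ℝ)+1)) * Real.exp (-(c₄ * 2 ^ (k+1)))
      = ((2:ℝ) ^ (β * ((k:ℝ)+1)) * Real.exp (-(c₄ * 2 ^ k)))
        * ((2:ℝ) ^ β * Real.exp (-(c₄ * 2 ^ k))) := by
        rw [e1, e2]; ring
    _ ≤ ((2:ℝ) ^ (β * ((k:ℝ)+1)) * Real.exp (-(c₄ * 2 ^ k))) * (1/2) :=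
        mul_le_mul_of_nonneg_left hk (by positivity)
    _ = 1/2 * ((2:ℝ) ^ (β * ((k:ℝ)+1)) * Real.exp (-(c₄ * 2 ^ k))) := by ring

end KernelLemmas

private lemma energy_decomp {Z : Type*} [MeasurableSpace Z] {P : MeasureTheory.Measure Z}
    {G W : Z → ℝ≥0∞} {c : ℝ≥0∞} {Φ₀ : Z → ℝ≥0∞} {Φ : ℕ → Z → ℝ≥0∞}
    {e : ℕ → ℝ≥0∞} (hc : c ≠ ⊤) (he : ∀ k, e k ≠ ⊤)
    (hG : AEMeasurable G P) (hΦ₀ : Measurable Φ₀) (hΦ : ∀ k, Measurable (Φ k))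
    (hbound : ∀ᵐ z ∂P, W z ≤ c * (Φ₀ z + ∑' k : ℕ, e k * Φ k z)) :
    ∫⁻ z, G z * W z ∂P ≤
      c * ((∫⁻ z, G z * Φ₀ z ∂P) + ∑' k : ℕ, e k * ∫⁻ z, G z * Φ k z ∂P) := by
  have h1 : ∫⁻ z, G z * W z ∂P ≤
      ∫⁻ z, (c * (G z * Φ₀ z) + ∑' k : ℕ, (e k * c) * (G z * Φ k z)) ∂P := by
    refine lintegral_mono_ae (hbound.mono fun z h => ?_)
    calc G z * W z ≤ G z * (c * (Φ₀ z + ∑' k : ℕ, e k * Φ k z)) := mul_le_mul_right h _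
      _ = c * (G z * Φ₀ z) + c * (G z * ∑' k : ℕ, e k * Φ k z) := by ring
      _ = c * (G z * Φ₀ z) + ∑' k : ℕ, (e k * c) * (G z * Φ k z) := by
          congr 1
          rw [← ENNReal.tsum_mul_left, ← ENNReal.tsum_mul_left]
          exact tsum_congr fun k => by ring
  have h2 : ∫⁻ z, (c * (G z * Φ₀ z) + ∑' k : ℕ, (e k * c) * (G z * Φ k z)) ∂P
      = c * (∫⁻ z, G z * Φ₀ z ∂P) + ∑' k : ℕ, (e k * c) * ∫⁻ z, G z * Φ k z ∂P := by
    rw [lintegral_add_left' (f := fun z => c * (G z * Φ₀ z)) ((hG.mul hΦ₀.aemeasurable).const_mul c),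
      lintegral_const_mul' c _ hc,
      lintegral_tsum (f := fun k z => (e k * c) * (G z * Φ k z)) fun k => ((hG.mul (hΦ k).aemeasurable).const_mul (e k * c))]
    congr 1
    exact tsum_congr fun k => lintegral_const_mul' _ _ (ENNReal.mul_ne_top (he k) hc)
  calc ∫⁻ z, G z * W z ∂P ≤ _ := h1
    _ = _ := h2
    _ = c * ((∫⁻ z, G z * Φ₀ z ∂P) + ∑' k : ℕ, e k * ∫⁻ z, G z * Φ k z ∂P) := by
        rw [mul_add]
        congr 1
        rw [← ENNReal.tsum_mul_left]
        exact tsum_congr fun k => by ring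

private lemma ofReal_collect4 (a b E c : ℝ) (ha : 0 ≤ a) (hb : 0 ≤ b) (hE : 0 ≤ E)
    (hc : 0 ≤ c) (H : ℝ≥0∞) :
    ENNReal.ofReal a * ENNReal.ofReal b * (ENNReal.ofReal E * (ENNReal.ofReal c * H))
      = ENNReal.ofReal (a * b * (E * c)) * H := by
  rw [ENNReal.ofReal_mul (mul_nonneg ha hb), ENNReal.ofReal_mul ha,
    ENNReal.ofReal_mul hE]
  ring

private lemma ofReal_collect3 (a b c : ℝ) (ha : 0 ≤ a) (hb : 0 ≤ b) (hc : 0 ≤ c)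
    (H : ℝ≥0∞) :
    ENNReal.ofReal a * ENNReal.ofReal b * (ENNReal.ofReal c * H)
      = ENNReal.ofReal (a * b * c) * H := by
  rw [ENNReal.ofReal_mul (mul_nonneg ha hb), ENNReal.ofReal_mul ha]
  ring

end AuxProofs

/-- **Co-area type estimate.** Under Ahlfors regularity and the upper sub-Gaussian
estimate, if `h(u,s) = sup_{r∈(0,R]} r^{−αd_W} μ({x ∈ E_s(u) : d(x, X∖E_s(u)) < r})`
is integrable in `s`, then `u ∈ B^{1,α}(X)` with
`‖u‖_{1,α} ≤ C₁ R^{−αd_W} ‖u‖_{L¹} + C₂ ∫_ℝ h(u,s) ds`,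
the constants depending only on `α` and the structural constants. -/
theorem coarea_estimate (dH dW c₁ c₂ c₃ c₄ α : ℝ)
    (hdH : 0 < dH) (hdW : 1 < dW) (hc₁ : 0 < c₁) (hc₂ : 0 < c₂)
    (hc₃ : 0 < c₃) (hc₄ : 0 < c₄) (hα0 : 0 < α) (hα1 : α ≤ dH / dW) :
    ∃ C₁ C₂ : ℝ, 0 < C₁ ∧ 0 < C₂ ∧
      ∀ (X : Type) [MetricSpace X] [MeasurableSpace X] [BorelSpace X]
        (μ : Measure X) [SigmaFinite μ] (K : ℝ → X → X → ℝ),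
        IsHeatKernel μ K → AhlforsRegular μ c₁ c₂ dH →
        SubGaussianUpperBound μ K c₃ c₄ dH dW →
        ∀ u : X → ℝ, MemLp u 1 μ → ∀ R : ℝ, 0 < R →
        (∫⁻ s : ℝ, ⨆ (r : ℝ) (_ : 0 < r) (_ : r ≤ R),
            ENNReal.ofReal (r ^ (-(α * dW))) *
              μ {x | s < u x ∧ Metric.infDist x {y | s < u y}ᶜ < r}) ≠ ∞ →
        MemBesov μ K 1 α u ∧
          besovSeminorm μ K 1 α u ≤
            ENNReal.ofReal (C₁ * R ^ (-(α * dW))) * eLpNorm u 1 μ +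
              ENNReal.ofReal C₂ *
                (∫⁻ s : ℝ, ⨆ (r : ℝ) (_ : 0 < r) (_ : r ≤ R),
                  ENNReal.ofReal (r ^ (-(α * dW))) *
                    μ {x | s < u x ∧ Metric.infDist x {y | s < u y}ᶜ < r}) := by
  have hdW0 : (0:ℝ) < dW := lt_trans one_pos hdW
  have hαdW : 0 < α * dW := mul_pos hα0 hdW0
  set β : ℝ := dH + α * dW with hβ
  have hSsum : Summable (fun k : ℕ => (2:ℝ) ^ (β * ((k:ℝ)+1)) * Real.exp (-(c₄ * 2 ^ k))) :=
    summable_aux hc₄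
  set S : ℝ := ∑' k : ℕ, (2:ℝ) ^ (β * ((k:ℝ)+1)) * Real.exp (-(c₄ * 2 ^ k)) with hSdef
  have hS0 : 0 ≤ S := tsum_nonneg fun k => by positivity
  set Creal : ℝ := 2 * c₂ * c₃ * (1 + S) with hCreal
  have hCreal0 : 0 < Creal := by positivity
  refine ⟨2 + Creal, Creal, by linarith, hCreal0, ?_⟩
  intro X _ _ _ μ _ K hK hAh hUB u hu R hR hHfin
  haveI : SecondCountableTopology X :=
    secondCountable_of_ahlfors μ hc₁ (fun x r hr => (hAh x r hr).1)
  have hup : ∀ (x : X) (r : ℝ), 0 < r → μ (Metric.ball x r) ≤ ENNReal.ofReal (c₂ * r ^ dH) :=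
    fun x r hr => (hAh x r hr).2
  have hum : AEMeasurable u μ := hu.aestronglyMeasurable.aemeasurable
  obtain ⟨v, hv, huv⟩ : ∃ v : X → ℝ, Measurable v ∧ u =ᵐ[μ] v :=
    ⟨hum.mk u, hum.measurable_mk, hum.ae_eq_mk⟩
  set A : ℝ≥0∞ := ∫⁻ x, ENNReal.ofReal |u x| ∂μ with hAdef
  have hAnorm : A = eLpNorm u 1 μ := by
    rw [hAdef, eLpNorm_one_eq_lintegral_enorm]
    exact lintegral_congr fun x => (Real.enorm_eq_ofReal_abs _).symm
  set HH : ℝ≥0∞ := ∫⁻ s : ℝ, ⨆ (r : ℝ) (_ : 0 < r) (_ : r ≤ R),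
      ENNReal.ofReal (r ^ (-(α * dW))) *
        μ {x | s < u x ∧ Metric.infDist x {y | s < u y}ᶜ < r} with hHHdef
  -- the layer estimate
  have hlayer : ∀ (s ρ : ℝ), 0 < ρ → ρ ≤ R →
      μ {x | s < u x ∧ Metric.infDist x {y | s < u y}ᶜ < ρ}
        ≤ ENNReal.ofReal (ρ ^ (α * dW)) *
          ⨆ (r : ℝ) (_ : 0 < r) (_ : r ≤ R), ENNReal.ofReal (r ^ (-(α * dW))) *
            μ {x | s < u x ∧ Metric.infDist x {y | s < u y}ᶜ < r} := by
    intro s ρ hρ hρR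
    have h1 : ENNReal.ofReal (ρ ^ (-(α * dW))) *
        μ {x | s < u x ∧ Metric.infDist x {y | s < u y}ᶜ < ρ}
        ≤ ⨆ (r : ℝ) (_ : 0 < r) (_ : r ≤ R), ENNReal.ofReal (r ^ (-(α * dW))) *
            μ {x | s < u x ∧ Metric.infDist x {y | s < u y}ᶜ < r} :=
      le_iSup_of_le ρ (le_iSup_of_le hρ (le_iSup_of_le hρR le_rfl))
    have h2 : ENNReal.ofReal (ρ ^ (α * dW)) * ENNReal.ofReal (ρ ^ (-(α * dW))) = 1 := by
      rw [← ENNReal.ofReal_mul (Real.rpow_nonneg hρ.le _), ← Real.rpow_add hρ,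
        add_neg_cancel, Real.rpow_zero, ENNReal.ofReal_one]
    calc μ {x | s < u x ∧ Metric.infDist x {y | s < u y}ᶜ < ρ}
        = (ENNReal.ofReal (ρ ^ (α * dW)) * ENNReal.ofReal (ρ ^ (-(α * dW)))) *
          μ {x | s < u x ∧ Metric.infDist x {y | s < u y}ᶜ < ρ} := by rw [h2, one_mul]
      _ = ENNReal.ofReal (ρ ^ (α * dW)) * (ENNReal.ofReal (ρ ^ (-(α * dW))) *
          μ {x | s < u x ∧ Metric.infDist x {y | s < u y}ᶜ < ρ}) := by rw [mul_assoc]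
      _ ≤ _ := mul_le_mul_right h1 _
  -- measurability
  have hu1 : AEMeasurable (fun z : X × X => u z.1) (μ.prod μ) :=
    hum.comp_quasiMeasurePreserving Measure.quasiMeasurePreserving_fst
  have hu2 : AEMeasurable (fun z : X × X => u z.2) (μ.prod μ) :=
    hum.comp_quasiMeasurePreserving Measure.quasiMeasurePreserving_snd
  have hGm : AEMeasurable (fun z : X × X => ENNReal.ofReal |u z.1 - u z.2|) (μ.prod μ) :=
    (continuous_abs.measurable.comp_aemeasurable (hu1.sub hu2)).ennreal_ofReal
  have hEeq : ∀ t : ℝ, besovEnergy μ K 1 t u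
      = ∫⁻ z : X × X, ENNReal.ofReal |u z.1 - u z.2|
          * ENNReal.ofReal (K t z.1 z.2) ∂(μ.prod μ) := by
    intro t
    rw [besovEnergy]
    simp_rw [Real.rpow_one]
    exact (lintegral_prod _ (hGm.mul ((hK.measurable t).ennreal_ofReal.aemeasurable))).symm
  -- the master estimate for each t
  have key : ∀ t : ℝ, 0 < t → ENNReal.ofReal (t ^ (-α)) * besovEnergy μ K 1 t u ≤
      ENNReal.ofReal ((2 + Creal) * R ^ (-(α * dW))) * eLpNorm u 1 μ +
        ENNReal.ofReal Creal * HH := by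
    intro t ht
    rcases le_or_gt t (R ^ dW) with hcase | hcase
    · -- small times
      set r₀ : ℝ := t ^ (1/dW) with hr₀def
      have hr₀ : 0 < r₀ := Real.rpow_pos_of_pos ht _
      have hr₀R : r₀ ≤ R := by
        calc r₀ ≤ (R ^ dW) ^ (1/dW) :=
            Real.rpow_le_rpow ht.le hcase (by positivity)
          _ = R := by
            rw [← Real.rpow_mul hR.le, mul_one_div_cancel hdW0.ne', Real.rpow_one]
      have hre : ∀ e : ℝ, r₀ ^ e = t ^ (e / dW) := by
        intro e
        rw [hr₀def, ← Real.rpow_mul ht.le]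
        congr 1
        field_simp
      have e1 : t ^ (-α) * t ^ α = 1 := by
        rw [← Real.rpow_add ht, neg_add_cancel, Real.rpow_zero]
      have e2 : t ^ (-(dH/dW)) * t ^ (dH/dW) = 1 := by
        rw [← Real.rpow_add ht, neg_add_cancel, Real.rpow_zero]
      have hrdH : r₀ ^ dH = t ^ (dH / dW) := hre dH
      have hrα : r₀ ^ (α * dW) = t ^ α := by
        rw [hre (α * dW)]
        congr 1
        exact mul_div_cancel_right₀ α hdW0.ne'
      have htneg : t ^ (-α) = r₀ ^ (-(α * dW)) := by
        rw [hre (-(α * dW))]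
        congr 1
        rw [neg_div, mul_div_cancel_right₀ α hdW0.ne']
      have hβk : ∀ k : ℕ, ((2:ℝ) ^ (k+1)) ^ dH * ((2:ℝ) ^ (k+1)) ^ (α * dW)
          = (2:ℝ) ^ (β * ((k:ℝ)+1)) := by
        intro k
        rw [← Real.rpow_natCast 2 (k+1), ← Real.rpow_mul (by norm_num : (0:ℝ) ≤ 2),
          ← Real.rpow_mul (by norm_num : (0:ℝ) ≤ 2),
          ← Real.rpow_add (by norm_num : (0:ℝ) < 2)]
        congr 1
        rw [hβ]
        push_cast
        ring
      have hker : ∀ᵐ z ∂(μ.prod μ), ENNReal.ofReal (K t z.1 z.2) ≤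
          ENNReal.ofReal (c₃ * t ^ (-(dH / dW))) *
            ((if dist z.1 z.2 < r₀ then (1:ℝ≥0∞) else 0) +
              ∑' k : ℕ, ENNReal.ofReal (Real.exp (-(c₄ * 2 ^ k))) *
                (if dist z.1 z.2 < 2 ^ (k+1) * r₀ then (1:ℝ≥0∞) else 0)) := by
        filter_upwards [hUB t ht] with z hz
        exact kernel_pointwise hdW hc₃.le hc₄ ht dist_nonneg hz
      have hDmass : ∀ ρ : ℝ, 0 < ρ →
          (∫⁻ z : X × X, ENNReal.ofReal |u z.1 - u z.2|
            * (if dist z.1 z.2 < ρ then (1:ℝ≥0∞) else 0) ∂(μ.prod μ))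
          ≤ ENNReal.ofReal (2 * (c₂ * ρ ^ dH)) * A :=
        fun ρ hρ => trunc_le_mass hup hv huv hρ
      have hDlayer : ∀ ρ : ℝ, 0 < ρ → ρ ≤ R →
          (∫⁻ z : X × X, ENNReal.ofReal |u z.1 - u z.2|
            * (if dist z.1 z.2 < ρ then (1:ℝ≥0∞) else 0) ∂(μ.prod μ))
          ≤ ENNReal.ofReal (2 * (c₂ * ρ ^ dH) * ρ ^ (α * dW)) * HH := by
        intro ρ h1 h2
        calc (∫⁻ z : X × X, ENNReal.ofReal |u z.1 - u z.2|
              * (if dist z.1 z.2 < ρ then (1:ℝ≥0∞) else 0) ∂(μ.prod μ))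
            ≤ ENNReal.ofReal (2 * (c₂ * ρ ^ dH)) *
              ∫⁻ s : ℝ, μ {x | s < u x ∧ Metric.infDist x {y | s < u y}ᶜ < ρ} :=
            trunc_le_layer hup hv huv h1
          _ ≤ ENNReal.ofReal (2 * (c₂ * ρ ^ dH)) *
              ∫⁻ s : ℝ, ENNReal.ofReal (ρ ^ (α * dW)) *
                (⨆ (r : ℝ) (_ : 0 < r) (_ : r ≤ R), ENNReal.ofReal (r ^ (-(α * dW))) *
                  μ {x | s < u x ∧ Metric.infDist x {y | s < u y}ᶜ < r}) :=
            mul_le_mul_right (lintegral_mono fun s => hlayer s ρ h1 h2) _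
          _ = ENNReal.ofReal (2 * (c₂ * ρ ^ dH)) * (ENNReal.ofReal (ρ ^ (α * dW)) * HH) := by
            rw [lintegral_const_mul' _ _ ENNReal.ofReal_ne_top, ← hHHdef]
          _ = ENNReal.ofReal (2 * (c₂ * ρ ^ dH) * ρ ^ (α * dW)) * HH := by
            rw [ENNReal.ofReal_mul (by positivity : (0:ℝ) ≤ 2 * (c₂ * ρ ^ dH)), mul_assoc]
      have hE2 := energy_decomp (P := μ.prod μ)
        (G := fun z : X × X => ENNReal.ofReal |u z.1 - u z.2|)
        (W := fun z : X × X => ENNReal.ofReal (K t z.1 z.2))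
        (c := ENNReal.ofReal (c₃ * t ^ (-(dH / dW))))
        (Φ₀ := fun z : X × X => (if dist z.1 z.2 < r₀ then (1:ℝ≥0∞) else 0))
        (Φ := fun (k : ℕ) (z : X × X) => (if dist z.1 z.2 < 2 ^ (k+1) * r₀ then (1:ℝ≥0∞) else 0))
        (e := fun k : ℕ => ENNReal.ofReal (Real.exp (-(c₄ * 2 ^ k))))
        ENNReal.ofReal_ne_top (fun k => ENNReal.ofReal_ne_top)
        hGm (measurable_ball_pair r₀) (fun k => measurable_ball_pair _) hker
      have hE3 : besovEnergy μ K 1 t u ≤ ENNReal.ofReal (c₃ * t ^ (-(dH / dW))) *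
          ((∫⁻ z : X × X, ENNReal.ofReal |u z.1 - u z.2|
              * (if dist z.1 z.2 < r₀ then (1:ℝ≥0∞) else 0) ∂(μ.prod μ)) +
            ∑' k : ℕ, ENNReal.ofReal (Real.exp (-(c₄ * 2 ^ k))) *
              ∫⁻ z : X × X, ENNReal.ofReal |u z.1 - u z.2|
                * (if dist z.1 z.2 < 2 ^ (k+1) * r₀ then (1:ℝ≥0∞) else 0) ∂(μ.prod μ)) := by
        rw [hEeq t]; exact hE2
      have piece0 : ENNReal.ofReal (t ^ (-α)) * ENNReal.ofReal (c₃ * t ^ (-(dH / dW))) *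
          (∫⁻ z : X × X, ENNReal.ofReal |u z.1 - u z.2|
            * (if dist z.1 z.2 < r₀ then (1:ℝ≥0∞) else 0) ∂(μ.prod μ))
          ≤ ENNReal.ofReal (2 * c₂ * c₃) * (ENNReal.ofReal (R ^ (-(α * dW))) * A + HH) := by
        calc ENNReal.ofReal (t ^ (-α)) * ENNReal.ofReal (c₃ * t ^ (-(dH / dW))) *
            (∫⁻ z : X × X, ENNReal.ofReal |u z.1 - u z.2|
              * (if dist z.1 z.2 < r₀ then (1:ℝ≥0∞) else 0) ∂(μ.prod μ))
            ≤ ENNReal.ofReal (t ^ (-α)) * ENNReal.ofReal (c₃ * t ^ (-(dH / dW))) *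
              (ENNReal.ofReal (2 * (c₂ * r₀ ^ dH) * r₀ ^ (α * dW)) * HH) :=
            mul_le_mul_right (hDlayer r₀ hr₀ hr₀R) _
          _ = ENNReal.ofReal (t ^ (-α) * (c₃ * t ^ (-(dH / dW))) *
                (2 * (c₂ * r₀ ^ dH) * r₀ ^ (α * dW))) * HH :=
            ofReal_collect3 _ _ _ (Real.rpow_nonneg ht.le _) (by positivity)
              (by positivity) HH
          _ = ENNReal.ofReal (2 * c₂ * c₃) * HH := by
            congr 1
            rw [hrdH, hrα]
            refine congrArg ENNReal.ofReal ?_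
            calc t ^ (-α) * (c₃ * t ^ (-(dH/dW))) * (2 * (c₂ * t ^ (dH/dW)) * t ^ α)
                = 2 * c₂ * c₃ * ((t ^ (-α) * t ^ α) * (t ^ (-(dH/dW)) * t ^ (dH/dW))) := by
                  ring
              _ = 2 * c₂ * c₃ := by rw [e1, e2]; ring
          _ ≤ _ := mul_le_mul_right le_add_self _
      have piecek : ∀ k : ℕ,
          ENNReal.ofReal (t ^ (-α)) * ENNReal.ofReal (c₃ * t ^ (-(dH / dW))) *
          (ENNReal.ofReal (Real.exp (-(c₄ * 2 ^ k))) *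
            ∫⁻ z : X × X, ENNReal.ofReal |u z.1 - u z.2|
              * (if dist z.1 z.2 < 2 ^ (k+1) * r₀ then (1:ℝ≥0∞) else 0) ∂(μ.prod μ))
          ≤ ENNReal.ofReal (2 * c₂ * c₃ *
              ((2:ℝ) ^ (β * ((k:ℝ)+1)) * Real.exp (-(c₄ * 2 ^ k)))) *
              (ENNReal.ofReal (R ^ (-(α * dW))) * A + HH) := by
        intro k
        have hβk' := hβk k
        have hqpos : (0:ℝ) < 2 ^ (k+1) := by positivity
        have hqr : 0 < 2 ^ (k+1) * r₀ := mul_pos hqpos hr₀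
        have hqdH : ((2:ℝ) ^ (k+1) * r₀) ^ dH = ((2:ℝ) ^ (k+1)) ^ dH * t ^ (dH / dW) := by
          rw [Real.mul_rpow hqpos.le hr₀.le, hrdH]
        have hqα : ((2:ℝ) ^ (k+1) * r₀) ^ (α * dW)
            = ((2:ℝ) ^ (k+1)) ^ (α * dW) * t ^ α := by
          rw [Real.mul_rpow hqpos.le hr₀.le, hrα]
        rcases le_or_gt ((2:ℝ) ^ (k+1) * r₀) R with hqR | hqR
        · calc ENNReal.ofReal (t ^ (-α)) * ENNReal.ofReal (c₃ * t ^ (-(dH / dW))) *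
              (ENNReal.ofReal (Real.exp (-(c₄ * 2 ^ k))) *
                ∫⁻ z : X × X, ENNReal.ofReal |u z.1 - u z.2|
                  * (if dist z.1 z.2 < 2 ^ (k+1) * r₀ then (1:ℝ≥0∞) else 0) ∂(μ.prod μ))
              ≤ ENNReal.ofReal (t ^ (-α)) * ENNReal.ofReal (c₃ * t ^ (-(dH / dW))) *
                (ENNReal.ofReal (Real.exp (-(c₄ * 2 ^ k))) *
                  (ENNReal.ofReal (2 * (c₂ * ((2:ℝ) ^ (k+1) * r₀) ^ dH)
                    * ((2:ℝ) ^ (k+1) * r₀) ^ (α * dW)) * HH)) :=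
              mul_le_mul_right (mul_le_mul_right (hDlayer ((2:ℝ) ^ (k+1) * r₀) hqr hqR) _) _
            _ = ENNReal.ofReal (t ^ (-α) * (c₃ * t ^ (-(dH / dW))) *
                  (Real.exp (-(c₄ * 2 ^ k)) * (2 * (c₂ * ((2:ℝ) ^ (k+1) * r₀) ^ dH)
                    * ((2:ℝ) ^ (k+1) * r₀) ^ (α * dW)))) * HH :=
              ofReal_collect4 _ _ _ _ (Real.rpow_nonneg ht.le _) (by positivity)
                (Real.exp_nonneg _) (by positivity) HH
            _ = ENNReal.ofReal (2 * c₂ * c₃ *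
                ((2:ℝ) ^ (β * ((k:ℝ)+1)) * Real.exp (-(c₄ * 2 ^ k)))) * HH := by
              congr 1
              rw [hqdH, hqα, ← hβk']
              refine congrArg ENNReal.ofReal ?_
              calc t ^ (-α) * (c₃ * t ^ (-(dH/dW))) *
                    (Real.exp (-(c₄ * 2 ^ k)) * (2 * (c₂ * (((2:ℝ) ^ (k+1)) ^ dH * t ^ (dH/dW)))
                      * (((2:ℝ) ^ (k+1)) ^ (α * dW) * t ^ α)))
                  = 2 * c₂ * c₃ * (((2:ℝ) ^ (k+1)) ^ dH * ((2:ℝ) ^ (k+1)) ^ (α * dW)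
                      * Real.exp (-(c₄ * 2 ^ k)))
                    * ((t ^ (-α) * t ^ α) * (t ^ (-(dH/dW)) * t ^ (dH/dW))) := by ring
                _ = 2 * c₂ * c₃ * (((2:ℝ) ^ (k+1)) ^ dH * ((2:ℝ) ^ (k+1)) ^ (α * dW)
                      * Real.exp (-(c₄ * 2 ^ k))) := by rw [e1, e2]; ring
            _ ≤ _ := mul_le_mul_right le_add_self _
        · have hrlb : R / 2 ^ (k+1) < r₀ := by
            rw [div_lt_iff₀ hqpos]
            linarith [hqR, mul_comm ((2:ℝ) ^ (k+1)) r₀]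
          have hRq : (0:ℝ) < R / 2 ^ (k+1) := div_pos hR hqpos
          have hmono : r₀ ^ (-(α * dW)) ≤ (R / 2 ^ (k+1)) ^ (-(α * dW)) :=
            Real.rpow_le_rpow_of_nonpos hRq hrlb.le (neg_nonpos.2 hαdW.le)
          have hsplit : (R / 2 ^ (k+1)) ^ (-(α * dW))
              = ((2:ℝ) ^ (k+1)) ^ (α * dW) * R ^ (-(α * dW)) := by
            rw [Real.rpow_neg (div_nonneg hR.le hqpos.le), Real.div_rpow hR.le hqpos.le,
              inv_div, Real.rpow_neg hR.le, div_eq_mul_inv]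
          calc ENNReal.ofReal (t ^ (-α)) * ENNReal.ofReal (c₃ * t ^ (-(dH / dW))) *
              (ENNReal.ofReal (Real.exp (-(c₄ * 2 ^ k))) *
                ∫⁻ z : X × X, ENNReal.ofReal |u z.1 - u z.2|
                  * (if dist z.1 z.2 < 2 ^ (k+1) * r₀ then (1:ℝ≥0∞) else 0) ∂(μ.prod μ))
              ≤ ENNReal.ofReal (t ^ (-α)) * ENNReal.ofReal (c₃ * t ^ (-(dH / dW))) *
                (ENNReal.ofReal (Real.exp (-(c₄ * 2 ^ k))) *
                  (ENNReal.ofReal (2 * (c₂ * ((2:ℝ) ^ (k+1) * r₀) ^ dH)) * A)) :=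
              mul_le_mul_right (mul_le_mul_right (hDmass ((2:ℝ) ^ (k+1) * r₀) hqr) _) _
            _ = ENNReal.ofReal (t ^ (-α) * (c₃ * t ^ (-(dH / dW))) *
                  (Real.exp (-(c₄ * 2 ^ k)) * (2 * (c₂ * ((2:ℝ) ^ (k+1) * r₀) ^ dH)))) * A :=
              ofReal_collect4 _ _ _ _ (Real.rpow_nonneg ht.le _) (by positivity)
                (Real.exp_nonneg _) (by positivity) A
            _ ≤ ENNReal.ofReal (2 * c₂ * c₃ *
                  ((2:ℝ) ^ (β * ((k:ℝ)+1)) * Real.exp (-(c₄ * 2 ^ k))) * R ^ (-(α * dW))) * A := by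
                refine mul_le_mul_left (ENNReal.ofReal_le_ofReal ?_) _
                calc t ^ (-α) * (c₃ * t ^ (-(dH/dW))) *
                      (Real.exp (-(c₄ * 2 ^ k)) * (2 * (c₂ * ((2:ℝ) ^ (k+1) * r₀) ^ dH)))
                    = 2 * c₂ * c₃ * (((2:ℝ) ^ (k+1)) ^ dH * Real.exp (-(c₄ * 2 ^ k)))
                      * (t ^ (-(dH/dW)) * t ^ (dH/dW)) * t ^ (-α) := by rw [hqdH]; ring
                  _ = 2 * c₂ * c₃ * (((2:ℝ) ^ (k+1)) ^ dH * Real.exp (-(c₄ * 2 ^ k)))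
                      * r₀ ^ (-(α * dW)) := by rw [e2, htneg]; ring
                  _ ≤ 2 * c₂ * c₃ * (((2:ℝ) ^ (k+1)) ^ dH * Real.exp (-(c₄ * 2 ^ k)))
                      * (((2:ℝ) ^ (k+1)) ^ (α * dW) * R ^ (-(α * dW))) := by
                      refine mul_le_mul_of_nonneg_left (hmono.trans (le_of_eq hsplit)) ?_
                      positivity
                  _ = 2 * c₂ * c₃ * (((2:ℝ) ^ (k+1)) ^ dH * ((2:ℝ) ^ (k+1)) ^ (α * dW)
                      * Real.exp (-(c₄ * 2 ^ k))) * R ^ (-(α * dW)) := by ring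
                  _ = 2 * c₂ * c₃ *
                      ((2:ℝ) ^ (β * ((k:ℝ)+1)) * Real.exp (-(c₄ * 2 ^ k))) * R ^ (-(α * dW)) := by
                      rw [← hβk']
            _ = ENNReal.ofReal (2 * c₂ * c₃ *
                  ((2:ℝ) ^ (β * ((k:ℝ)+1)) * Real.exp (-(c₄ * 2 ^ k)))) *
                  (ENNReal.ofReal (R ^ (-(α * dW))) * A) := by
                rw [ENNReal.ofReal_mul (by positivity), mul_assoc]
            _ ≤ _ := mul_le_mul_right le_self_add _
      calc ENNReal.ofReal (t ^ (-α)) * besovEnergy μ K 1 t u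
          ≤ ENNReal.ofReal (t ^ (-α)) * (ENNReal.ofReal (c₃ * t ^ (-(dH / dW))) *
            ((∫⁻ z : X × X, ENNReal.ofReal |u z.1 - u z.2|
                * (if dist z.1 z.2 < r₀ then (1:ℝ≥0∞) else 0) ∂(μ.prod μ)) +
              ∑' k : ℕ, ENNReal.ofReal (Real.exp (-(c₄ * 2 ^ k))) *
                ∫⁻ z : X × X, ENNReal.ofReal |u z.1 - u z.2|
                  * (if dist z.1 z.2 < 2 ^ (k+1) * r₀ then (1:ℝ≥0∞) else 0) ∂(μ.prod μ))) :=
            mul_le_mul_right hE3 _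
        _ = ENNReal.ofReal (t ^ (-α)) * ENNReal.ofReal (c₃ * t ^ (-(dH / dW))) *
            (∫⁻ z : X × X, ENNReal.ofReal |u z.1 - u z.2|
              * (if dist z.1 z.2 < r₀ then (1:ℝ≥0∞) else 0) ∂(μ.prod μ))
            + ∑' k : ℕ, ENNReal.ofReal (t ^ (-α)) * ENNReal.ofReal (c₃ * t ^ (-(dH / dW))) *
              (ENNReal.ofReal (Real.exp (-(c₄ * 2 ^ k))) *
                ∫⁻ z : X × X, ENNReal.ofReal |u z.1 - u z.2|
                  * (if dist z.1 z.2 < 2 ^ (k+1) * r₀ then (1:ℝ≥0∞) else 0) ∂(μ.prod μ)) := by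
            rw [← mul_assoc, mul_add, ← ENNReal.tsum_mul_left]
        _ ≤ ENNReal.ofReal (2 * c₂ * c₃) * (ENNReal.ofReal (R ^ (-(α * dW))) * A + HH)
            + ∑' k : ℕ, ENNReal.ofReal (2 * c₂ * c₃ *
                ((2:ℝ) ^ (β * ((k:ℝ)+1)) * Real.exp (-(c₄ * 2 ^ k)))) *
                (ENNReal.ofReal (R ^ (-(α * dW))) * A + HH) :=
            add_le_add piece0 (ENNReal.tsum_le_tsum piecek)
        _ = ENNReal.ofReal (2 * c₂ * c₃) * (ENNReal.ofReal (R ^ (-(α * dW))) * A + HH)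
            + ENNReal.ofReal (2 * c₂ * c₃ * S) * (ENNReal.ofReal (R ^ (-(α * dW))) * A + HH) := by
            congr 1
            rw [ENNReal.tsum_mul_right, ← ENNReal.ofReal_tsum_of_nonneg
              (fun k => by positivity) (hSsum.mul_left (2 * c₂ * c₃)), tsum_mul_left, ← hSdef]
        _ = ENNReal.ofReal Creal * (ENNReal.ofReal (R ^ (-(α * dW))) * A + HH) := by
            rw [← add_mul, ← ENNReal.ofReal_add (by positivity) (by positivity)]
            have : 2 * c₂ * c₃ + 2 * c₂ * c₃ * S = Creal := by rw [hCreal]; ring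
            rw [this]
        _ = ENNReal.ofReal Creal * (ENNReal.ofReal (R ^ (-(α * dW))) * A)
            + ENNReal.ofReal Creal * HH := by rw [mul_add]
        _ ≤ ENNReal.ofReal ((2 + Creal) * R ^ (-(α * dW))) * eLpNorm u 1 μ
            + ENNReal.ofReal Creal * HH := by
            refine add_le_add_left ?_ _
            rw [← hAnorm, ENNReal.ofReal_mul (by linarith : (0:ℝ) ≤ 2 + Creal), mul_assoc]
            exact mul_le_mul_left (ENNReal.ofReal_le_ofReal (by linarith)) _
    · -- large times
      have hEb : besovEnergy μ K 1 t u ≤ 2 * A := by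
        rw [hEeq t, hAdef]
        exact energy_le_mass hK hv huv ht
      have ht' : ENNReal.ofReal (t ^ (-α)) ≤ ENNReal.ofReal (R ^ (-(α * dW))) := by
        apply ENNReal.ofReal_le_ofReal
        calc t ^ (-α) ≤ (R ^ dW) ^ (-α) :=
            Real.rpow_le_rpow_of_nonpos (Real.rpow_pos_of_pos hR dW) hcase.le
              (neg_nonpos.2 hα0.le)
          _ = R ^ (-(α * dW)) := by
            rw [← Real.rpow_mul hR.le]
            congr 1
            ring
      calc ENNReal.ofReal (t ^ (-α)) * besovEnergy μ K 1 t u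
          ≤ ENNReal.ofReal (R ^ (-(α * dW))) * (2 * A) := mul_le_mul' ht' hEb
        _ = ENNReal.ofReal 2 * (ENNReal.ofReal (R ^ (-(α * dW))) * A) := by
            rw [ENNReal.ofReal_ofNat]
            ring
        _ ≤ ENNReal.ofReal (2 + Creal) * (ENNReal.ofReal (R ^ (-(α * dW))) * A) :=
            mul_le_mul_left (ENNReal.ofReal_le_ofReal (by linarith)) _
        _ = ENNReal.ofReal ((2 + Creal) * R ^ (-(α * dW))) * eLpNorm u 1 μ := by
            rw [ENNReal.ofReal_mul (by linarith : (0:ℝ) ≤ 2 + Creal), mul_assoc, hAnorm]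
        _ ≤ _ := le_self_add
  have hsem : besovSeminorm μ K 1 α u ≤
      ENNReal.ofReal ((2 + Creal) * R ^ (-(α * dW))) * eLpNorm u 1 μ +
        ENNReal.ofReal Creal * HH := by
    rw [besovSeminorm]
    refine iSup₂_le fun t ht => ?_
    rw [show (1:ℝ)/1 = 1 by norm_num, ENNReal.rpow_one]
    exact key t ht
  refine ⟨?_, hsem⟩
  show MemLp u (ENNReal.ofReal 1) μ ∧ besovSeminorm μ K 1 α u ≠ ⊤
  constructor
  · rw [ENNReal.ofReal_one]; exact hu
  · refine ne_top_of_le_ne_top ?_ hsem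
    exact ENNReal.add_ne_top.2 ⟨ENNReal.mul_ne_top ENNReal.ofReal_ne_top hu.2.ne,
      ENNReal.mul_ne_top ENNReal.ofReal_ne_top hHfin⟩


end BesovDirichlet
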